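/- (Strict concavity of the approximated log-likelihood, core of Theorem 3.) Fix real numbers v > 0, Δ > 0, an integer m ≥ 1, a constant c ≥ 0, and real numbers u_1, …, u_m with 0 < u_i ≤ v²·Δ² for each i. Then the function ℓ(λ) = −λ·c + ∑_{i=1}^{m} log( λ·I_0((λ/v)·√u_i) + (λ·v·Δ/√u_i)·I_1((λ/v)·√u_i) ), defined for λ > 0, is twice differentiable on (0, ∞) with ℓ''(λ) < 0 for all λ > 0; i.e., ℓ is strictly concave on (0, ∞). -/

import Mathlib

noncomputable def besselI (ν : ℕ) (x : ℝ) : ℝ :=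
  ∑' k : ℕ, (x / 2) ^ (2 * k + ν) / ((Nat.factorial k : ℝ) * Nat.factorial (k + ν))

open Real Filter

lemma besselI_summable (ν : ℕ) (x : ℝ) :
    Summable (fun k : ℕ => (x / 2) ^ (2 * k + ν) / ((Nat.factorial k : ℝ) * Nat.factorial (k + ν))) := by
  have hs : Summable (fun k : ℕ => (|x|/2)^ν * ((x^2/4)^k / k.factorial)) :=
    (Real.summable_pow_div_factorial (x^2/4)).mul_left _
  refine hs.of_norm_bounded fun k => ?_
  have h1 : ‖(x / 2) ^ (2 * k + ν) / ((Nat.factorial k : ℝ) * Nat.factorial (k + ν))‖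
      = (|x|/2) ^ (2*k+ν) / ((Nat.factorial k : ℝ) * Nat.factorial (k + ν)) := by
    rw [norm_div, norm_pow, Real.norm_eq_abs, Real.norm_eq_abs, abs_div]
    have : |((Nat.factorial k : ℝ) * Nat.factorial (k + ν))| = (Nat.factorial k : ℝ) * Nat.factorial (k + ν) := by
      exact abs_of_nonneg (by positivity)
    rw [this, abs_two]
  rw [h1]
  have h2 : (|x|/2) ^ (2*k+ν) = (x^2/4)^k * (|x|/2)^ν := by
    rw [pow_add, pow_mul]
    congr 2
    rw [div_pow, sq_abs]; norm_num
  rw [h2, mul_comm ((x^2/4)^k), mul_div_assoc]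
  apply mul_le_mul_of_nonneg_left _ (by positivity)
  apply div_le_div_of_nonneg_left (by positivity) (by positivity)
  have := Nat.one_le_iff_ne_zero.mpr (Nat.factorial_ne_zero (k+ν))
  calc (Nat.factorial k : ℝ) = (Nat.factorial k : ℝ) * 1 := by ring
    _ ≤ (Nat.factorial k : ℝ) * Nat.factorial (k+ν) := by
        apply mul_le_mul_of_nonneg_left _ (by positivity)
        exact_mod_cast this

lemma master_summable {f : ℕ → ℝ} (C q : ℝ) (h : ∀ k, ‖f k‖ ≤ C * (q ^ k / k.factorial)) :
    Summable f :=
  Summable.of_norm_bounded ((Real.summable_pow_div_factorial q).mul_left C) h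

lemma key_pow (R : ℝ) (hR : 1 ≤ R) (n : ℕ) :
    (n : ℝ) * (R / 2) ^ (n - 1) * (1 / 2) ≤ R ^ n := by
  have hR0 : (0:ℝ) ≤ R := le_trans zero_le_one hR
  cases n with
  | zero => norm_num
  | succ m =>
      have h1 : ((m+1 : ℕ) : ℝ) ≤ 2 ^ (m+1) := by
        exact_mod_cast (Nat.lt_two_pow_self (n := m+1)).le
      calc ((m+1 : ℕ) : ℝ) * (R / 2) ^ (m + 1 - 1) * (1 / 2)
          ≤ (2 ^ (m+1) : ℝ) * (R / 2) ^ (m + 1 - 1) * (1 / 2) := by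
            have hp : (0:ℝ) ≤ (R/2) ^ (m+1-1) := by positivity
            have := mul_le_mul_of_nonneg_right (mul_le_mul_of_nonneg_right h1 hp)
              (by norm_num : (0:ℝ) ≤ 1/2)
            exact this
          _ = R ^ m := by
            simp only [Nat.add_sub_cancel]
            rw [div_pow]; field_simp; ring
          _ ≤ R ^ (m+1) := pow_le_pow_right₀ hR (Nat.le_succ m)

section gen

variable (c : ℕ → ℝ) (ν : ℕ)

lemma gen_norm_bound (hc : ∀ k, |c k| ≤ 2 / k.factorial) {R : ℝ} (hR : 1 ≤ R)
    {y : ℝ} (hy : |y| ≤ R) (k : ℕ) :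
    ‖c k * (((2*k+ν : ℕ) : ℝ) * (y/2) ^ (2*k+ν-1) * (1/2))‖
      ≤ (2 * R ^ ν) * ((R^2) ^ k / k.factorial) := by
  have hR0 : (0:ℝ) < R := lt_of_lt_of_le one_pos hR
  have hab : |y/2| ≤ R/2 := by
    rw [abs_div, abs_two]; gcongr
  have h1 : ‖c k * (((2*k+ν : ℕ) : ℝ) * (y/2) ^ (2*k+ν-1) * (1/2))‖
      ≤ (2 / k.factorial) * (((2*k+ν : ℕ) : ℝ) * (R/2) ^ (2*k+ν-1) * (1/2)) := by
    rw [Real.norm_eq_abs, abs_mul, abs_mul, abs_mul, abs_pow]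
    have hn : |((2*k+ν : ℕ) : ℝ)| = ((2*k+ν : ℕ) : ℝ) := abs_of_nonneg (Nat.cast_nonneg _)
    rw [hn]
    have h12 : |(1:ℝ)/2| = (1:ℝ)/2 := by norm_num
    rw [h12]
    have hinner : ((2*k+ν : ℕ) : ℝ) * |y/2| ^ (2*k+ν-1) * (1/2)
        ≤ ((2*k+ν : ℕ) : ℝ) * (R/2) ^ (2*k+ν-1) * (1/2) := by
      gcongr
    exact mul_le_mul (hc k) hinner (by positivity) (by positivity)
  refine h1.trans ?_
  have h2 : ((2*k+ν : ℕ) : ℝ) * (R/2) ^ (2*k+ν-1) * (1/2) ≤ R ^ (2*k+ν) := by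
    have := key_pow R hR (2*k+ν)
    simpa using this
  calc (2 / (k.factorial:ℝ)) * (((2*k+ν : ℕ) : ℝ) * (R/2) ^ (2*k+ν-1) * (1/2))
      ≤ (2 / (k.factorial:ℝ)) * R ^ (2*k+ν) := by
        apply mul_le_mul_of_nonneg_left h2 (by positivity)
    _ = (2 * R ^ ν) * ((R^2) ^ k / k.factorial) := by
        rw [pow_add, pow_mul]; field_simp

lemma gen_summable (hc : ∀ k, |c k| ≤ 2 / k.factorial) (x : ℝ) :
    Summable (fun k => c k * (x/2) ^ (2*k+ν)) := by
  set R : ℝ := |x| + 1 with hRdef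
  have hR : 1 ≤ R := le_add_of_nonneg_left (abs_nonneg x)
  have hR0 : (0:ℝ) < R := lt_of_lt_of_le one_pos hR
  refine master_summable (2 * R ^ ν) (R^2) fun k => ?_
  have hab : |x/2| ≤ R := by
    rw [abs_div, abs_two]
    calc |x|/2 ≤ |x| := by linarith [abs_nonneg x]
      _ ≤ R := by rw [hRdef]; linarith
  calc ‖c k * (x/2) ^ (2*k+ν)‖ = |c k| * |x/2| ^ (2*k+ν) := by
        rw [Real.norm_eq_abs, abs_mul, abs_pow]
    _ ≤ (2 / k.factorial) * R ^ (2*k+ν) := by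
        exact mul_le_mul (hc k) (pow_le_pow_left₀ (abs_nonneg _) hab _) (by positivity) (by positivity)
    _ = (2 * R ^ ν) * ((R^2) ^ k / k.factorial) := by
        rw [pow_add, pow_mul]; field_simp

lemma gen_summable' (hc : ∀ k, |c k| ≤ 2 / k.factorial) (x : ℝ) :
    Summable (fun k => c k * (((2*k+ν : ℕ) : ℝ) * (x/2) ^ (2*k+ν-1) * (1/2))) := by
  set R : ℝ := |x| + 1 with hRdef
  have hR : 1 ≤ R := le_add_of_nonneg_left (abs_nonneg x)
  refine master_summable (2 * R ^ ν) (R^2) fun k => ?_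
  exact gen_norm_bound c ν hc hR (by rw [hRdef]; linarith [lt_add_one |x|]) k

lemma gen_hasDerivAt (hc : ∀ k, |c k| ≤ 2 / k.factorial) (x : ℝ) :
    HasDerivAt (fun y => ∑' k, c k * (y/2) ^ (2*k+ν))
      (∑' k, c k * (((2*k+ν : ℕ) : ℝ) * (x/2) ^ (2*k+ν-1) * (1/2))) x := by
  set R : ℝ := |x| + 1 with hRdef
  have hR : 1 ≤ R := le_add_of_nonneg_left (abs_nonneg x)
  have hx : x ∈ Metric.ball (0:ℝ) R := by
    rw [Metric.mem_ball, Real.dist_eq, sub_zero, hRdef]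
    exact lt_add_one _
  refine hasDerivAt_tsum_of_isPreconnected
    (u := fun k => (2 * R ^ ν) * ((R^2) ^ k / k.factorial))
    (g := fun k y => c k * (y/2) ^ (2*k+ν))
    (g' := fun k y => c k * (((2*k+ν : ℕ) : ℝ) * (y/2) ^ (2*k+ν-1) * (1/2)))
    ((Real.summable_pow_div_factorial (R^2)).mul_left _)
    Metric.isOpen_ball (convex_ball (0:ℝ) R).isPreconnected
    (fun k y _ => ?_) (fun k y hy => ?_) hx (gen_summable c ν hc x) hx
  · exact (((hasDerivAt_id y).div_const 2).pow _).const_mul (c k)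
  · refine gen_norm_bound c ν hc hR ?_ k
    have := Metric.mem_ball.mp hy
    rw [Real.dist_eq, sub_zero] at this
    exact this.le

end gen

lemma besselI_coeff_bound (ν : ℕ) :
    ∀ k : ℕ, |(1 : ℝ) / ((k.factorial : ℝ) * (k+ν).factorial)| ≤ 2 / k.factorial := by
  intro k
  have h1 : (1:ℝ) ≤ ((k+ν).factorial : ℝ) := by exact_mod_cast (k+ν).factorial_pos
  have h2 : (0:ℝ) < (k.factorial : ℝ) := by exact_mod_cast k.factorial_pos
  rw [abs_of_nonneg (by positivity)]
  rw [div_le_div_iff₀ (by positivity) h2]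
  nlinarith

lemma besselI_fun_eq (ν : ℕ) :
    (fun y : ℝ => ∑' k : ℕ, (1 / ((k.factorial : ℝ) * (k+ν).factorial)) * (y/2) ^ (2*k+ν))
      = besselI ν := by
  funext y
  exact tsum_congr fun k => by rw [one_div, inv_mul_eq_div]

lemma besselI_differentiable (ν : ℕ) : Differentiable ℝ (besselI ν) := by
  intro x
  have h := gen_hasDerivAt (fun k => (1 : ℝ) / ((k.factorial : ℝ) * (k+ν).factorial)) ν
    (besselI_coeff_bound ν) x
  rw [besselI_fun_eq ν] at h
  exact h.differentiableAt

lemma besselI_zero_hasDerivAt (x : ℝ) : HasDerivAt (besselI 0) (besselI 1 x) x := by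
  have h := gen_hasDerivAt (fun k => (1 : ℝ) / ((k.factorial : ℝ) * (k+0).factorial)) 0
    (besselI_coeff_bound 0) x
  rw [besselI_fun_eq 0] at h
  have hs := gen_summable' (fun k => (1 : ℝ) / ((k.factorial : ℝ) * (k+0).factorial)) 0
    (besselI_coeff_bound 0) x
  have e : (∑' k : ℕ, (1 / ((k.factorial : ℝ) * (k+0).factorial)) *
      (((2*k+0 : ℕ) : ℝ) * (x/2) ^ (2*k+0-1) * (1/2))) = besselI 1 x := by
    rw [hs.tsum_eq_zero_add]
    have h0 : (1 / ((Nat.factorial 0 : ℝ) * (0+0).factorial)) *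
        (((2*0+0 : ℕ) : ℝ) * (x/2) ^ (2*0+0-1) * (1/2)) = 0 := by norm_num
    rw [h0, zero_add, besselI]
    refine tsum_congr fun k => ?_
    have he : 2*(k+1)+0-1 = 2*k+1 := by omega
    rw [he]
    have hf : ((k+1).factorial : ℝ) = (k+1) * k.factorial := by
      rw [Nat.factorial_succ]; push_cast; ring
    have hk1 : ((k+1 : ℕ) : ℝ) ≠ 0 := by positivity
    have hkf : ((k.factorial : ℕ) : ℝ) ≠ 0 := by
      exact_mod_cast k.factorial_ne_zero
    have hkf1 : (((k+1).factorial : ℕ) : ℝ) ≠ 0 := by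
      exact_mod_cast (k+1).factorial_ne_zero
    rw [Nat.add_zero, hf]
    field_simp [hf]
    push_cast
    ring
  rw [e] at h
  exact h

lemma xBesselI_one_eq (y : ℝ) :
    y * besselI 1 y = ∑' k : ℕ, (2 / ((k.factorial : ℝ) * (k+1).factorial)) * (y/2) ^ (2*k+2) := by
  rw [besselI, ← tsum_mul_left]
  refine tsum_congr fun k => ?_
  have : (y/2) ^ (2*k+2) = (y/2) ^ (2*k+1) * (y/2) := by rw [← pow_succ]
  rw [this]
  field_simp

lemma xBesselI_one_hasDerivAt (x : ℝ) :
    HasDerivAt (fun y : ℝ => y * besselI 1 y) (x * besselI 0 x) x := by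
  have hc : ∀ k : ℕ, |(2 : ℝ) / ((k.factorial : ℝ) * (k+1).factorial)| ≤ 2 / k.factorial := by
    intro k
    have h1 : (1:ℝ) ≤ ((k+1).factorial : ℝ) := by exact_mod_cast (k+1).factorial_pos
    have h2 : (0:ℝ) < (k.factorial : ℝ) := by exact_mod_cast k.factorial_pos
    rw [abs_of_nonneg (by positivity), div_le_div_iff₀ (by positivity) h2]
    nlinarith
  have h := gen_hasDerivAt (fun k => (2 : ℝ) / ((k.factorial : ℝ) * (k+1).factorial)) 2 hc x
  have e1 : (fun y : ℝ => ∑' k : ℕ, (2 / ((k.factorial : ℝ) * (k+1).factorial)) * (y/2) ^ (2*k+2))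
      = fun y : ℝ => y * besselI 1 y := by
    funext y; rw [xBesselI_one_eq]
  rw [e1] at h
  have e2 : (∑' k : ℕ, (2 / ((k.factorial : ℝ) * (k+1).factorial)) *
      (((2*k+2 : ℕ) : ℝ) * (x/2) ^ (2*k+2-1) * (1/2))) = x * besselI 0 x := by
    rw [besselI, ← tsum_mul_left]
    refine tsum_congr fun k => ?_
    have he : 2*k+2-1 = 2*k+1 := by omega
    rw [he]
    have hf : ((k+1).factorial : ℝ) = (k+1) * k.factorial := by
      rw [Nat.factorial_succ]; push_cast; ring
    have hkf : ((k.factorial : ℕ) : ℝ) ≠ 0 := by exact_mod_cast k.factorial_ne_zero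
    have : (x/2) ^ (2*k+1) = (x/2) ^ (2*k+0) * (x/2) := by rw [← pow_succ]
    rw [this, Nat.add_zero, hf]
    field_simp [hf]
    push_cast
    ring
  rw [e2] at h
  exact h

lemma besselI_term_nonneg (ν k : ℕ) {x : ℝ} (hx : 0 ≤ x) :
    0 ≤ (x / 2) ^ (2 * k + ν) / ((Nat.factorial k : ℝ) * Nat.factorial (k + ν)) := by
  positivity

lemma besselI_zero_ge_one (x : ℝ) : 1 ≤ besselI 0 x := by
  have hnn : ∀ k : ℕ, 0 ≤ (x / 2) ^ (2 * k + 0) / ((Nat.factorial k : ℝ) * Nat.factorial (k + 0)) := by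
    intro k
    have : (x/2) ^ (2*k+0) = ((x/2)^2) ^ k := by rw [Nat.add_zero, pow_mul]
    rw [this]
    positivity
  have h := Summable.le_tsum (besselI_summable 0 x) 0 (fun k _ => hnn k)
  rw [besselI]
  calc (1:ℝ) = (x/2)^(2*0+0)/((Nat.factorial 0:ℝ)*Nat.factorial (0+0)) := by norm_num
    _ ≤ _ := h

lemma besselI_one_nonneg {x : ℝ} (hx : 0 ≤ x) : 0 ≤ besselI 1 x :=
  tsum_nonneg fun k => besselI_term_nonneg 1 k hx

lemma besselI_one_pos {x : ℝ} (hx : 0 < x) : 0 < besselI 1 x := by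
  have h0 : 0 < (x / 2) ^ (2 * 0 + 1) / ((Nat.factorial 0 : ℝ) * Nat.factorial (0 + 1)) := by
    norm_num; positivity
  have := h0.trans_le (Summable.le_tsum (besselI_summable 1 x) 0 (fun k _ => besselI_term_nonneg 1 k hx.le))
  exact this

lemma besselI_one_zero : besselI 1 0 = 0 := by
  rw [besselI]
  convert tsum_zero with k
  simp

lemma besselI_one_hasDerivAt {x : ℝ} (hx : x ≠ 0) :
    HasDerivAt (besselI 1) (besselI 0 x - besselI 1 x / x) x := by
  have hq : HasDerivAt (fun y : ℝ => (y * besselI 1 y) / y)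
      ((x * besselI 0 x * x - x * besselI 1 x * 1) / x ^ 2) x :=
    (xBesselI_one_hasDerivAt x).div (hasDerivAt_id x) hx
  have heq : (fun y : ℝ => (y * besselI 1 y) / y) =ᶠ[nhds x] besselI 1 := by
    filter_upwards [IsOpen.mem_nhds isOpen_compl_singleton hx] with y hy
    have hy' : y ≠ 0 := hy
    field_simp
  have h := hq.congr_of_eventuallyEq heq.symm
  refine h.congr_deriv ?_
  field_simp

noncomputable def Wf (z : ℝ) : ℝ :=
  z * ((besselI 0 z) ^ 2 - (besselI 1 z) ^ 2) - besselI 0 z * besselI 1 z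

lemma Wf_hasDerivAt {z : ℝ} (hz : 0 < z) :
    HasDerivAt Wf (besselI 0 z * besselI 1 z / z) z := by
  have hA := besselI_zero_hasDerivAt z
  have hB := besselI_one_hasDerivAt hz.ne'
  have h : HasDerivAt Wf
      (1 * ((besselI 0 z) ^ 2 - (besselI 1 z) ^ 2)
        + z * (((2:ℕ) * (besselI 0 z) ^ 1 * besselI 1 z)
          - ((2:ℕ) * (besselI 1 z) ^ 1 * (besselI 0 z - besselI 1 z / z)))
        - (besselI 1 z * besselI 1 z + besselI 0 z * (besselI 0 z - besselI 1 z / z))) z := by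
    exact ((hasDerivAt_id z).mul ((hA.pow 2).sub (hB.pow 2))).sub (hA.mul hB)
  convert h using 1
  field_simp
  ring

lemma Wf_continuous : Continuous Wf := by
  have h0 := (besselI_differentiable 0).continuous
  have h1 := (besselI_differentiable 1).continuous
  unfold Wf
  fun_prop

lemma Wf_zero : Wf 0 = 0 := by
  simp [Wf, besselI_one_zero]

lemma Wf_pos {z : ℝ} (hz : 0 < z) : 0 < Wf z := by
  have hmono : StrictMonoOn Wf (Set.Ici (0:ℝ)) := by
    apply strictMonoOn_of_deriv_pos (convex_Ici 0) Wf_continuous.continuousOn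
    intro x hx
    rw [interior_Ici] at hx
    have hx0 : 0 < x := hx
    rw [(Wf_hasDerivAt hx0).deriv]
    have hA := besselI_zero_ge_one x
    have hB := besselI_one_pos hx0
    positivity
  have := hmono (Set.self_mem_Ici) (Set.mem_Ici.mpr hz.le) hz
  rwa [Wf_zero] at this

noncomputable def Gf (a b l : ℝ) : ℝ :=
  l * besselI 0 (a * l) + b * l * besselI 1 (a * l)

noncomputable def Gf₁ (a b l : ℝ) : ℝ :=
  besselI 0 (a * l) + (a * l) * besselI 1 (a * l) + b * ((a * l) * besselI 0 (a * l))

noncomputable def Gf₂ (a b l : ℝ) : ℝ :=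
  a * (besselI 1 (a * l) + (a * l) * besselI 0 (a * l)
    + b * (besselI 0 (a * l) + (a * l) * besselI 1 (a * l)))

lemma xA_hasDerivAt (x : ℝ) :
    HasDerivAt (fun y : ℝ => y * besselI 0 y) (besselI 0 x + x * besselI 1 x) x := by
  have := (hasDerivAt_id x).mul (besselI_zero_hasDerivAt x)
  refine this.congr_deriv ?_
  simp only [id_eq]
  ring

lemma const_mul_hasDerivAt (a l : ℝ) : HasDerivAt (fun y : ℝ => a * y) a l := by
  simpa using (hasDerivAt_id l).const_mul a

lemma Gf_hasDerivAt (a b : ℝ) (ha : a ≠ 0) (l : ℝ) :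
    HasDerivAt (Gf a b) (Gf₁ a b l) l := by
  have hfun : Gf a b = fun y : ℝ =>
      y * besselI 0 (a * y) + (b / a) * ((a * y) * besselI 1 (a * y)) := by
    funext y
    unfold Gf
    field_simp
  rw [hfun]
  have h1 : HasDerivAt (fun y : ℝ => besselI 0 (a * y)) (besselI 1 (a * l) * a) l :=
    (besselI_zero_hasDerivAt (a * l)).comp l (const_mul_hasDerivAt a l)
  have h2 : HasDerivAt (fun y : ℝ => (a * y) * besselI 1 (a * y)) ((a * l) * besselI 0 (a * l) * a) l :=
    (xBesselI_one_hasDerivAt (a * l)).comp l (const_mul_hasDerivAt a l)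
  have h := ((hasDerivAt_id l).mul h1).add (h2.const_mul (b / a))
  refine h.congr_deriv ?_
  unfold Gf₁
  simp only [id_eq]
  field_simp

lemma Gf₁_hasDerivAt (a b : ℝ) (l : ℝ) :
    HasDerivAt (Gf₁ a b) (Gf₂ a b l) l := by
  have h1 : HasDerivAt (fun y : ℝ => besselI 0 (a * y)) (besselI 1 (a * l) * a) l :=
    (besselI_zero_hasDerivAt (a * l)).comp l (const_mul_hasDerivAt a l)
  have h2 : HasDerivAt (fun y : ℝ => (a * y) * besselI 1 (a * y)) ((a * l) * besselI 0 (a * l) * a) l :=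
    (xBesselI_one_hasDerivAt (a * l)).comp l (const_mul_hasDerivAt a l)
  have h3 : HasDerivAt (fun y : ℝ => (a * y) * besselI 0 (a * y))
      ((besselI 0 (a * l) + (a * l) * besselI 1 (a * l)) * a) l :=
    (xA_hasDerivAt (a * l)).comp l (const_mul_hasDerivAt a l)
  have h := (h1.add h2).add (h3.const_mul b)
  refine h.congr_deriv ?_
  unfold Gf₂
  ring

lemma key_identity (a b l : ℝ) :
    (Gf₁ a b l) ^ 2 - Gf a b l * Gf₂ a b l
      = (besselI 0 (a*l)) ^ 2 + b * (besselI 0 (a*l) * besselI 1 (a*l))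
        + (b + (b ^ 2 - 1) * (a * l)) * Wf (a * l) := by
  unfold Gf Gf₁ Gf₂ Wf
  ring

lemma key_ineq (a b : ℝ) (ha : 0 < a) (hb : 1 ≤ b) {l : ℝ} (hl : 0 < l) :
    Gf a b l * Gf₂ a b l < (Gf₁ a b l) ^ 2 := by
  have hz : 0 < a * l := mul_pos ha hl
  have hA := besselI_zero_ge_one (a * l)
  have hB := besselI_one_pos hz
  have hW := Wf_pos hz
  have hb2 : 0 ≤ (b ^ 2 - 1) * (a * l) := mul_nonneg (by nlinarith) hz.le
  have hcoef : 0 < b + (b ^ 2 - 1) * (a * l) := by linarith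
  have t1 : 0 < (besselI 0 (a*l)) ^ 2 := by nlinarith
  have t2 : 0 < b * (besselI 0 (a*l) * besselI 1 (a*l)) :=
    mul_pos (lt_of_lt_of_le one_pos hb) (mul_pos (lt_of_lt_of_le one_pos hA) hB)
  have t3 : 0 < (b + (b ^ 2 - 1) * (a * l)) * Wf (a * l) := mul_pos hcoef hW
  linarith [key_identity a b l]

lemma Gf_pos (a b : ℝ) (ha : 0 < a) (hb : 1 ≤ b) {l : ℝ} (hl : 0 < l) :
    0 < Gf a b l := by
  have hz : 0 < a * l := mul_pos ha hl
  have hA := besselI_zero_ge_one (a * l)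
  have hB := besselI_one_pos hz
  unfold Gf
  have h1 : 0 < l * besselI 0 (a * l) := mul_pos hl (lt_of_lt_of_le one_pos hA)
  have h2 : 0 < b * l * besselI 1 (a * l) :=
    mul_pos (mul_pos (lt_of_lt_of_le one_pos hb) hl) hB
  linarith

theorem aux_concave (m : ℕ) (hm : 1 ≤ m) (c : ℝ) (a b : Fin m → ℝ)
    (ha : ∀ i, 0 < a i) (hb : ∀ i, 1 ≤ b i) :
    (∀ lam : ℝ, 0 < lam →
      DifferentiableAt ℝ
        (fun l : ℝ => -l * c + ∑ i : Fin m, Real.log (Gf (a i) (b i) l)) lam ∧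
      DifferentiableAt ℝ
        (deriv (fun l : ℝ => -l * c + ∑ i : Fin m, Real.log (Gf (a i) (b i) l))) lam) ∧
    (∀ lam : ℝ, 0 < lam →
      deriv (deriv (fun l : ℝ => -l * c + ∑ i : Fin m, Real.log (Gf (a i) (b i) l))) lam < 0) := by
  set F : ℝ → ℝ := fun l : ℝ => -l * c + ∑ i : Fin m, Real.log (Gf (a i) (b i) l) with hF
  set g : ℝ → ℝ := fun l : ℝ => -c + ∑ i : Fin m, Gf₁ (a i) (b i) l / Gf (a i) (b i) l with hg
  have hF' : ∀ l : ℝ, 0 < l → HasDerivAt F (g l) l := by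
    intro l hl
    have hsum : HasDerivAt (fun l : ℝ => ∑ i : Fin m, Real.log (Gf (a i) (b i) l))
        (∑ i : Fin m, Gf₁ (a i) (b i) l / Gf (a i) (b i) l) l :=
      HasDerivAt.fun_sum fun i _ =>
        (Gf_hasDerivAt (a i) (b i) (ha i).ne' l).log (Gf_pos (a i) (b i) (ha i) (hb i) hl).ne'
    have hlin : HasDerivAt (fun l : ℝ => -l * c) (-c) l := by
      have := ((hasDerivAt_id l).neg).mul_const c
      refine this.congr_deriv ?_
      ring
    exact hlin.add hsum
  have hg' : ∀ l : ℝ, 0 < l → HasDerivAt g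
      (∑ i : Fin m, (Gf₂ (a i) (b i) l * Gf (a i) (b i) l
        - Gf₁ (a i) (b i) l * Gf₁ (a i) (b i) l) / Gf (a i) (b i) l ^ 2) l := by
    intro l hl
    have hsum : HasDerivAt (fun l : ℝ => ∑ i : Fin m, Gf₁ (a i) (b i) l / Gf (a i) (b i) l)
        (∑ i : Fin m, (Gf₂ (a i) (b i) l * Gf (a i) (b i) l
          - Gf₁ (a i) (b i) l * Gf₁ (a i) (b i) l) / Gf (a i) (b i) l ^ 2) l :=
      HasDerivAt.fun_sum fun i _ =>
        (Gf₁_hasDerivAt (a i) (b i) l).div (Gf_hasDerivAt (a i) (b i) (ha i).ne' l)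
          (Gf_pos (a i) (b i) (ha i) (hb i) hl).ne'
    have := (hasDerivAt_const l (-c)).add hsum
    exact this.congr_deriv (zero_add _)
  have hev : ∀ lam : ℝ, 0 < lam → deriv F =ᶠ[nhds lam] g := by
    intro lam hlam
    filter_upwards [Ioi_mem_nhds hlam] with y hy
    exact (hF' y hy).deriv
  refine ⟨fun lam hlam => ⟨(hF' lam hlam).differentiableAt, ?_⟩, fun lam hlam => ?_⟩
  · exact ((hev lam hlam).differentiableAt_iff).mpr (hg' lam hlam).differentiableAt
  · rw [(hev lam hlam).deriv_eq, (hg' lam hlam).deriv]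
    haveI : Nonempty (Fin m) := ⟨⟨0, lt_of_lt_of_le zero_lt_one hm⟩⟩
    apply Finset.sum_neg (fun i _ => ?_) Finset.univ_nonempty
    apply div_neg_of_neg_of_pos
    · nlinarith [key_ineq (a i) (b i) (ha i) (hb i) hlam]
    · exact pow_pos (Gf_pos (a i) (b i) (ha i) (hb i) hlam) 2

/-- Strict concavity of the approximated log-likelihood, core of Theorem 3. -/
theorem logLik_strictly_concave (v Δ : ℝ) (hv : 0 < v) (hΔ : 0 < Δ)
    (m : ℕ) (hm : 1 ≤ m) (c : ℝ) (hc : 0 ≤ c) (u : Fin m → ℝ)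
    (hu : ∀ i, 0 < u i ∧ u i ≤ v ^ 2 * Δ ^ 2) :
    (∀ lam : ℝ, 0 < lam →
      DifferentiableAt ℝ
        (fun l : ℝ => -l * c + ∑ i : Fin m, Real.log
          (l * besselI 0 ((l / v) * Real.sqrt (u i))
            + (l * v * Δ / Real.sqrt (u i)) *
                besselI 1 ((l / v) * Real.sqrt (u i)))) lam ∧
      DifferentiableAt ℝ
        (deriv (fun l : ℝ => -l * c + ∑ i : Fin m, Real.log
          (l * besselI 0 ((l / v) * Real.sqrt (u i))
            + (l * v * Δ / Real.sqrt (u i)) *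
                besselI 1 ((l / v) * Real.sqrt (u i))))) lam) ∧
    (∀ lam : ℝ, 0 < lam →
      deriv (deriv (fun l : ℝ => -l * c + ∑ i : Fin m, Real.log
        (l * besselI 0 ((l / v) * Real.sqrt (u i))
          + (l * v * Δ / Real.sqrt (u i)) *
              besselI 1 ((l / v) * Real.sqrt (u i))))) lam < 0) := by
  have hs : ∀ i, 0 < Real.sqrt (u i) := fun i => Real.sqrt_pos.mpr (hu i).1
  have ha : ∀ i, 0 < Real.sqrt (u i) / v := fun i => div_pos (hs i) hv
  have hb : ∀ i, 1 ≤ v * Δ / Real.sqrt (u i) := by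
    intro i
    have h1 : Real.sqrt (u i) ≤ v * Δ := by
      have h2 := Real.sqrt_le_sqrt (hu i).2
      rwa [show v ^ 2 * Δ ^ 2 = (v * Δ) ^ 2 by ring, Real.sqrt_sq (by positivity)] at h2
    exact (one_le_div (hs i)).mpr h1
  have hfun : (fun l : ℝ => -l * c + ∑ i : Fin m, Real.log
      (l * besselI 0 ((l / v) * Real.sqrt (u i))
        + (l * v * Δ / Real.sqrt (u i)) * besselI 1 ((l / v) * Real.sqrt (u i))))
      = fun l : ℝ => -l * c + ∑ i : Fin m,
          Real.log (Gf (Real.sqrt (u i) / v) (v * Δ / Real.sqrt (u i)) l) := by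
    funext l
    congr 1
    refine Finset.sum_congr rfl fun i _ => ?_
    congr 1
    have harg : (l / v) * Real.sqrt (u i) = (Real.sqrt (u i) / v) * l := by
      field_simp
    have hcoef : l * v * Δ / Real.sqrt (u i) = (v * Δ / Real.sqrt (u i)) * l := by
      field_simp
    rw [harg, hcoef]
    unfold Gf
    ring
  rw [hfun]
  exact aux_concave m hm c (fun i => Real.sqrt (u i) / v) (fun i => v * Δ / Real.sqrt (u i)) ha hb
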